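/- If a signed graph whose underlying unsigned graph has maximum degree at most 3 (subcubic) possesses any defensive alliance, then it possesses a defensive alliance of size at most 2. -/

import Mathlib

open Set

variable {V : Type*}

/-- Number of `G`-neighbors of `v` inside the set `S`. -/
noncomputable def ndegOn (G : SimpleGraph V) (S : Set V) (v : V) : ℕ := (S ∩ {u | G.Adj v u}).ncard

/-- Total number of `G`-neighbors of `v`. -/
noncomputable def ndeg (G : SimpleGraph V) (v : V) : ℕ := {u | G.Adj v u}.ncard

/-- `S` is a defensive alliance in the signed graph `(V, Gp, Gn)`. -/
def IsDefAlliance (Gp Gn : SimpleGraph V) (S : Set V) : Prop :=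
  S.Nonempty ∧ ∀ v ∈ S,
    ndegOn Gn S v ≤ ndegOn Gp S v + 1 ∧ ndegOn Gn Sᶜ v ≤ ndegOn Gp S v + 1

/-- Defensive alliance number: minimum size of a defensive alliance. -/
noncomputable def asd (Gp Gn : SimpleGraph V) : ℕ :=
  sInf {n | ∃ S : Set V, IsDefAlliance Gp Gn S ∧ S.ncard = n}

section Aux
variable [Fintype V]

lemma ndegOn_mono (G : SimpleGraph V) {S T : Set V} (h : S ⊆ T) (v : V) :
    ndegOn G S v ≤ ndegOn G T v :=
  Set.ncard_le_ncard (Set.inter_subset_inter_left _ h) (Set.toFinite _)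

lemma ndegOn_le_ndeg (G : SimpleGraph V) (S : Set V) (v : V) :
    ndegOn G S v ≤ ndeg G v :=
  Set.ncard_le_ncard Set.inter_subset_right (Set.toFinite _)

lemma ndegOn_add_compl (G : SimpleGraph V) (S : Set V) (v : V) :
    ndegOn G S v + ndegOn G Sᶜ v = ndeg G v := by
  rw [ndegOn, ndegOn, ndeg, ← Set.ncard_union_eq ?_ (Set.toFinite _) (Set.toFinite _)]
  · congr 1
    ext u
    by_cases h : u ∈ S <;> simp [h]
  · exact Set.disjoint_left.2 fun u hu hu2 => hu2.1 hu.1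

lemma ndegOn_pair_of_adj (G : SimpleGraph V) {v w : V} (h : G.Adj v w) :
    ndegOn G {v, w} v = 1 := by
  have he : ({v, w} : Set V) ∩ {u | G.Adj v u} = {w} := by
    ext u
    simp only [Set.mem_inter_iff, Set.mem_insert_iff, Set.mem_singleton_iff, Set.mem_setOf_eq]
    constructor
    · rintro ⟨rfl | rfl, ha⟩
      · exact absurd ha (G.loopless.irrefl _)
      · rfl
    · rintro rfl; exact ⟨Or.inr rfl, h⟩
  rw [ndegOn, he, Set.ncard_singleton]

lemma ndegOn_pair_of_not_adj (G : SimpleGraph V) {v w : V} (h : ¬ G.Adj v w) :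
    ndegOn G {v, w} v = 0 := by
  have he : ({v, w} : Set V) ∩ {u | G.Adj v u} = ∅ := by
    ext u
    simp only [Set.mem_inter_iff, Set.mem_insert_iff, Set.mem_singleton_iff, Set.mem_setOf_eq,
      Set.mem_empty_iff_false, iff_false, not_and]
    rintro (rfl | rfl) ha
    · exact G.loopless.irrefl _ ha
    · exact h ha
  rw [ndegOn, he, Set.ncard_empty]

lemma ndeg_add_ndeg (Gp Gn : SimpleGraph V) (hdisj : Disjoint Gp Gn) (v : V) :
    ndeg Gp v + ndeg Gn v = ndeg (Gp ⊔ Gn) v := by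
  have hnd : ∀ a b : V, Gp.Adj a b → ¬ Gn.Adj a b := by
    intro a b hp hn
    have hb : Gp ⊓ Gn = ⊥ := disjoint_iff.mp hdisj
    exact (hb ▸ (⟨hp, hn⟩ : (Gp ⊓ Gn).Adj a b) : (⊥ : SimpleGraph V).Adj a b)
  have hset : ({u | (Gp ⊔ Gn).Adj v u} : Set V) = {u | Gp.Adj v u} ∪ {u | Gn.Adj v u} := by
    ext u; simp [SimpleGraph.sup_adj]
  rw [ndeg, ndeg, ndeg, hset]
  exact (Set.ncard_union_eq (Set.disjoint_left.2 fun u hu hu2 => hnd v u hu hu2)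
      (Set.toFinite _) (Set.toFinite _)).symm

/-- In the case that `v` has a `Gp`-neighbor `w`, the pair `{v,w}` satisfies `v`'s conditions. -/
lemma case_pos (Gp Gn : SimpleGraph V) (hdisj : Disjoint Gp Gn)
    (hsub : ∀ v : V, ndeg (Gp ⊔ Gn) v ≤ 3) {v w : V} (hvw : Gp.Adj v w) :
    ndegOn Gn {v, w} v ≤ ndegOn Gp {v, w} v + 1 ∧
    ndegOn Gn ({v, w} : Set V)ᶜ v ≤ ndegOn Gp {v, w} v + 1 := by
  have hnadj : ¬ Gn.Adj v w := by
    intro hn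
    have hb : Gp ⊓ Gn = ⊥ := disjoint_iff.mp hdisj
    exact (hb ▸ (⟨hvw, hn⟩ : (Gp ⊓ Gn).Adj v w) : (⊥ : SimpleGraph V).Adj v w)
  have h1 : ndegOn Gp {v, w} v = 1 := ndegOn_pair_of_adj Gp hvw
  have h0 : ndegOn Gn {v, w} v = 0 := ndegOn_pair_of_not_adj Gn hnadj
  have hp1 : 1 ≤ ndeg Gp v := by
    rw [ndeg]
    exact (Set.ncard_pos (Set.toFinite _)).mpr ⟨w, hvw⟩
  have hn2 : ndeg Gn v ≤ 2 := by
    have := ndeg_add_ndeg Gp Gn hdisj v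
    have := hsub v
    omega
  constructor
  · omega
  · have := ndegOn_le_ndeg Gn ({v, w} : Set V)ᶜ v
    omega

/-- In the case that `Gp` has no edges and `v`'s only `Gn`-neighbor in `S` is `w`. -/
lemma case_neg (Gn : SimpleGraph V) {S : Set V} {v w : V} (hw : w ∈ S)
    (hadj : Gn.Adj v w) (h1 : ndegOn Gn S v ≤ 1) (h2 : ndegOn Gn Sᶜ v ≤ 1) :
    ndegOn Gn {v, w} v ≤ 1 ∧ ndegOn Gn ({v, w} : Set V)ᶜ v ≤ 1 := by
  have hpair : ndegOn Gn {v, w} v = 1 := ndegOn_pair_of_adj Gn hadj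
  have hSv : S ∩ {u | Gn.Adj v u} = {w} := by
    have hwmem : w ∈ S ∩ {u | Gn.Adj v u} := ⟨hw, hadj⟩
    have hsub1 : (S ∩ {u | Gn.Adj v u}) ⊆ {w} := by
      intro u hu
      by_contra hne
      have h2le : 2 ≤ (S ∩ {u | Gn.Adj v u}).ncard := by
        have : ({u, w} : Set V) ⊆ S ∩ {u | Gn.Adj v u} := by
          rintro x (rfl | rfl)
          exacts [hu, hwmem]
        calc 2 = ({u, w} : Set V).ncard := by
                  rw [Set.ncard_pair (by simpa using hne)]
             _ ≤ _ := Set.ncard_le_ncard this (Set.toFinite _)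
      rw [ndegOn] at h1
      omega
    exact Set.Subset.antisymm hsub1 (Set.singleton_subset_iff.2 hwmem)
  refine ⟨by omega, ?_⟩
  have hsub2 : (({v, w} : Set V)ᶜ ∩ {u | Gn.Adj v u}) ⊆ Sᶜ ∩ {u | Gn.Adj v u} := by
    rintro u ⟨hu1, hu2⟩
    refine ⟨fun huS => ?_, hu2⟩
    have : u ∈ ({w} : Set V) := hSv ▸ ⟨huS, hu2⟩
    exact hu1 (Or.inr this)
  calc ndegOn Gn ({v, w} : Set V)ᶜ v ≤ ndegOn Gn Sᶜ v :=
        Set.ncard_le_ncard hsub2 (Set.toFinite _)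
    _ ≤ 1 := h2

end Aux

theorem stmt8 [Fintype V] (Gp Gn : SimpleGraph V) (hdisj : Disjoint Gp Gn)
    (hsub : ∀ v : V, ndeg (Gp ⊔ Gn) v ≤ 3)
    (hex : ∃ S : Set V, IsDefAlliance Gp Gn S) :
    ∃ S : Set V, IsDefAlliance Gp Gn S ∧ S.ncard ≤ 2 := by
  by_cases hp : ∃ v u, Gp.Adj v u
  · obtain ⟨v, u, hvu⟩ := hp
    refine ⟨{v, u}, ⟨⟨v, Or.inl rfl⟩, ?_⟩, ?_⟩
    · rintro x (rfl | rfl)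
      · exact case_pos Gp Gn hdisj hsub hvu
      · have := case_pos Gp Gn hdisj hsub hvu.symm
        rwa [Set.pair_comm] at this
    · exact le_trans (Set.ncard_insert_le _ _) (by simp)
  · push_neg at hp
    have hGp0 : ∀ (T : Set V) (x : V), ndegOn Gp T x = 0 := by
      intro T x
      rw [ndegOn]
      convert Set.ncard_empty V
      ext u
      simp only [Set.mem_inter_iff, Set.mem_setOf_eq, Set.mem_empty_iff_false, iff_false, not_and]
      exact fun _ => hp x u
    obtain ⟨S, ⟨v, hvS⟩, hall⟩ := hex
    obtain ⟨hv1, hv2⟩ := hall v hvS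
    rw [hGp0] at hv1 hv2
    by_cases hin : (S ∩ {u | Gn.Adj v u}).Nonempty
    · obtain ⟨w, hwS, hwadj⟩ := hin
      refine ⟨{v, w}, ⟨⟨v, Or.inl rfl⟩, ?_⟩, ?_⟩
      · rintro x (rfl | rfl)
        · rw [hGp0]
          exact case_neg Gn hwS hwadj hv1 hv2
        · obtain ⟨hw1, hw2⟩ := hall x hwS
          rw [hGp0] at hw1 hw2
          rw [hGp0, Set.pair_comm]
          exact case_neg Gn hvS hwadj.symm hw1 hw2
      · exact le_trans (Set.ncard_insert_le _ _) (by simp)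
    · rw [Set.not_nonempty_iff_eq_empty] at hin
      refine ⟨{v}, ⟨⟨v, rfl⟩, ?_⟩, by simp⟩
      rintro x rfl
      rw [hGp0]
      have hself : ndegOn Gn {x} x = 0 := by
        have := ndegOn_pair_of_not_adj Gn (Gn.loopless.irrefl x)
        simpa using this
      have hcompl : ndegOn Gn ({x} : Set V)ᶜ x ≤ 1 := by
        have hsplit := ndegOn_add_compl Gn S x
        have hle := ndegOn_le_ndeg Gn ({x} : Set V)ᶜ x
        rw [ndegOn, hin, Set.ncard_empty] at hsplit
        omega
      exact ⟨by omega, hcompl⟩
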